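/- Let w be a positive integer and x, y integers with w dividing x² + y² + 1. Then there exist Gaussian integers p and q with q ≠ 0 such that |q|² + |q·(x+yi) − p·w|² = w, where |·|² denotes the norm of a Gaussian integer. In particular, writing q = c + di and q·(x+yi) − p·w = a + bi with a, b, c, d ∈ ℤ, one has w = a² + b² + c² + d². -/

import Mathlib

open MeasureTheory Module Submodule ENNReal

set_option maxHeartbeats 1000000 in
/-- Let `w` be a positive integer and `x, y` integers with `w ∣ x² + y² + 1`.  Then there
exist Gaussian integers `p` and `q` with `q ≠ 0` such that
`|q|² + |q(x+yi) − pw|² = w`; in particular, writing `q = c + di` and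
`q(x+yi) − pw = a + bi`, one has `w = a² + b² + c² + d²`. -/
theorem exists_four_squares_representation
    (w : ℕ) (hw : 0 < w) (x y : ℤ) (hxy : (w : ℤ) ∣ x ^ 2 + y ^ 2 + 1) :
    ∃ p q : GaussianInt, q ≠ 0 ∧
      Zsqrtd.norm q + Zsqrtd.norm (q * ⟨x, y⟩ - p * (w : GaussianInt)) = w ∧
      (w : ℤ) = (q * ⟨x, y⟩ - p * (w : GaussianInt)).re ^ 2
          + (q * ⟨x, y⟩ - p * (w : GaussianInt)).im ^ 2 + q.re ^ 2 + q.im ^ 2 := by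
  rcases eq_or_lt_of_le (show 1 ≤ w from hw) with h1 | hw2
  · -- case w = 1
    refine ⟨⟨x, y⟩, 1, one_ne_zero, ?_, ?_⟩ <;>
      simp [← h1, Zsqrtd.norm_def, Zsqrtd.ext_iff]
  -- now 2 ≤ w
  have hw0 : (0:ℝ) < (w:ℝ) := by exact_mod_cast hw
  -- the matrix whose rows span the lattice
  set A : Matrix (Fin 4) (Fin 4) ℝ :=
    !![1, 0, (x:ℝ), (y:ℝ); 0, 1, (-(y:ℤ) : ℝ), (x:ℝ); 0, 0, (w:ℝ), 0; 0, 0, 0, (w:ℝ)] with hA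
  have hdetA : A.det = (w:ℝ)^2 := by
    simp [hA, Matrix.det_succ_row_zero, Fin.sum_univ_succ]
    ring
  have hAunit : IsUnit A := by
    rw [Matrix.isUnit_iff_isUnit_det, hdetA, isUnit_iff_ne_zero]
    positivity
  have hli : LinearIndependent ℝ (fun i => A i) :=
    Matrix.linearIndependent_rows_iff_isUnit.mpr hAunit
  have hcard : Fintype.card (Fin 4) = finrank ℝ (Fin 4 → ℝ) := by
    simp [Module.finrank_fintype_fun_eq_card]
  let b : Basis (Fin 4) ℝ (Fin 4 → ℝ) := basisOfLinearIndependentOfCardEqFinrank hli hcard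
  have hb : ⇑b = fun i => A i := coe_basisOfLinearIndependentOfCardEqFinrank hli hcard
  set L : AddSubgroup (Fin 4 → ℝ) := (span ℤ (Set.range ⇑b)).toAddSubgroup with hL
  have fund := ZSpan.isAddFundamentalDomain' b volume
  -- the convex body
  set r : ℝ := Real.sqrt (2 * w) with hr
  let T : (Fin 4 → ℝ) →ₗ[ℝ] EuclideanSpace ℝ (Fin 4) :=
    (WithLp.linearEquiv 2 ℝ (Fin 4 → ℝ)).symm
  set s : Set (Fin 4 → ℝ) := ⇑T ⁻¹' Metric.ball (0 : EuclideanSpace ℝ (Fin 4)) r with hs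
  have h_symm : ∀ v ∈ s, -v ∈ s := by
    intro v hv
    simp only [hs, Set.mem_preimage, map_neg, mem_ball_zero_iff, norm_neg] at hv ⊢
    exact hv
  have h_conv : Convex ℝ s := (convex_ball _ _).linear_preimage T
  -- volume computations
  have hvol_s : volume s = ENNReal.ofReal (2 * Real.pi ^ 2 * (w:ℝ)^2) := by
    have h1 : volume s = volume (Metric.ball (0 : EuclideanSpace ℝ (Fin 4)) r) := by
      exact (PiLp.volume_preserving_toLp (Fin 4)).measure_preimage
        measurableSet_ball.nullMeasurableSet
    rw [h1, EuclideanSpace.volume_ball]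
    have hΓ : Real.Gamma ((Fintype.card (Fin 4) : ℝ) / 2 + 1) = 2 := by
      have h3 : ((Fintype.card (Fin 4) : ℝ)) / 2 + 1 = ((2:ℕ):ℝ) + 1 := by
        simp [Fintype.card_fin]; norm_num
      rw [h3, Real.Gamma_nat_eq_factorial]
      norm_num
    have hr0 : 0 ≤ r := Real.sqrt_nonneg _
    have hr4 : r ^ 4 = 4 * (w:ℝ)^2 := by
      have : r ^ 4 = (r ^ 2) ^ 2 := by ring
      rw [this, hr, Real.sq_sqrt (by positivity)]
      ring
    have hπ : Real.sqrt Real.pi ^ 4 = Real.pi ^ 2 := by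
      rw [show (4:ℕ) = 2*2 from rfl, pow_mul, Real.sq_sqrt Real.pi_nonneg]
    rw [hΓ, Fintype.card_fin, ← ENNReal.ofReal_pow hr0, ← ENNReal.ofReal_mul (by positivity)]
    congr 1
    rw [hr4, hπ]
    ring
  have hvol_F : volume (ZSpan.fundamentalDomain b) = ENNReal.ofReal ((w:ℝ)^2) := by
    rw [ZSpan.volume_fundamentalDomain]
    congr 1
    have : (Matrix.of ⇑b) = A := by
      ext i j
      rw [hb]
      rfl
    rw [this, hdetA, abs_of_nonneg (by positivity)]
  have hvol_lt : volume (ZSpan.fundamentalDomain b) * 2 ^ finrank ℝ (Fin 4 → ℝ) < volume s := by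
    rw [hvol_F, hvol_s, ← hcard]
    have h2 : (2 : ℝ≥0∞) ^ (Fintype.card (Fin 4)) = ENNReal.ofReal 16 := by
      rw [show (16:ℝ) = 2 ^ 4 by norm_num, ENNReal.ofReal_pow (by norm_num)]
      norm_num
    rw [h2, ← ENNReal.ofReal_mul (by positivity)]
    rw [ENNReal.ofReal_lt_ofReal_iff (by positivity)]
    have h8 : (8:ℝ) < Real.pi ^ 2 := by nlinarith [Real.pi_gt_three]
    nlinarith [mul_pos (sub_pos.mpr h8) (mul_pos hw0 hw0)]
  haveI : Countable L := (inferInstance : Countable (span ℤ (Set.range ⇑b)))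
  obtain ⟨u, hu0, hus⟩ :=
    exists_ne_zero_mem_lattice_of_measure_mul_two_pow_lt_measure (L := L)
      fund h_symm h_conv hvol_lt
  have huE : (u : Fin 4 → ℝ) ≠ 0 := by
    simpa using Subtype.coe_injective.ne hu0
  have humem : (u : Fin 4 → ℝ) ∈ span ℤ (Set.range ⇑b) := u.2
  rw [mem_span_range_iff_exists_fun] at humem
  obtain ⟨c, hc⟩ := humem
  obtain ⟨t, ht⟩ := hxy
  set a1 : ℤ := c 0 * x - c 1 * y + c 2 * w with ha1
  set a2 : ℤ := c 0 * y + c 1 * x + c 3 * w with ha2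
  -- components of u
  have hcomp : ∀ j, (u : Fin 4 → ℝ) j = ((![c 0, c 1, a1, a2] j : ℤ) : ℝ) := by
    intro j
    have := congrFun hc j
    rw [Finset.sum_apply] at this
    simp only [Pi.smul_apply, zsmul_eq_mul, hb] at this
    fin_cases j <;>
    · rw [← this, Fin.sum_univ_four]
      simp [hA, ha1, ha2, Matrix.cons_val_zero, Matrix.cons_val_one, Matrix.head_cons,
        Matrix.cons_val_two, Matrix.cons_val_three, Matrix.vecHead, Matrix.vecTail]
      try push_cast
      try ring
  set N : ℤ := c 0 ^ 2 + c 1 ^ 2 + a1 ^ 2 + a2 ^ 2 with hN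
  have hNlt : N < 2 * w := by
    have hnorm : ‖T (u : Fin 4 → ℝ)‖ < r := by
      simpa only [hs, Set.mem_preimage, mem_ball_zero_iff] using hus
    rw [EuclideanSpace.norm_eq] at hnorm
    have hTu : ∀ j, (T (u : Fin 4 → ℝ)) j = (u : Fin 4 → ℝ) j := fun _ => rfl
    have hsum : ∑ j, ‖(T (u : Fin 4 → ℝ)) j‖ ^ 2 = (N : ℝ) := by
      simp only [hTu, Real.norm_eq_abs, sq_abs]
      rw [Fin.sum_univ_four, hcomp 0, hcomp 1, hcomp 2, hcomp 3,
        show ![c 0, c 1, a1, a2] 0 = c 0 from rfl, show ![c 0, c 1, a1, a2] 1 = c 1 from rfl,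
        show ![c 0, c 1, a1, a2] 2 = a1 from rfl, show ![c 0, c 1, a1, a2] 3 = a2 from rfl]
      push_cast [hN]
      ring
    rw [hsum, hr] at hnorm
    have hN0 : (0:ℝ) ≤ (N:ℝ) := by
      rw [← hsum]; positivity
    have : (N : ℝ) < 2 * w := (Real.sqrt_lt_sqrt_iff hN0).mp hnorm
    exact_mod_cast this
  have hNpos : 0 < N := by
    rcases lt_or_eq_of_le (show (0:ℤ) ≤ N by positivity) with h | h
    · exact h
    exfalso
    apply huE
    rw [hN] at h
    have h0 : c 0 = 0 := by
      have : c 0 ^ 2 = 0 := by linarith [sq_nonneg (c 0), sq_nonneg (c 1), sq_nonneg a1, sq_nonneg a2]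
      exact sq_eq_zero_iff.mp this
    have h1 : c 1 = 0 := by
      have : c 1 ^ 2 = 0 := by linarith [sq_nonneg (c 0), sq_nonneg (c 1), sq_nonneg a1, sq_nonneg a2]
      exact sq_eq_zero_iff.mp this
    have h2 : a1 = 0 := by
      have : a1 ^ 2 = 0 := by linarith [sq_nonneg (c 0), sq_nonneg (c 1), sq_nonneg a1, sq_nonneg a2]
      exact sq_eq_zero_iff.mp this
    have h3 : a2 = 0 := by
      have : a2 ^ 2 = 0 := by linarith [sq_nonneg (c 0), sq_nonneg (c 1), sq_nonneg a1, sq_nonneg a2]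
      exact sq_eq_zero_iff.mp this
    funext j
    rw [hcomp j]
    fin_cases j <;>
      simp [h0, h1, h2, h3, Matrix.cons_val_zero, Matrix.cons_val_one, Matrix.head_cons,
        Matrix.cons_val_two, Matrix.cons_val_three, Matrix.vecHead, Matrix.vecTail]
  have hNdvd : (w : ℤ) ∣ N := by
    refine ⟨(c 0 ^ 2 + c 1 ^ 2) * t + (2 * (c 0 * x - c 1 * y) * c 2 + c 2 ^ 2 * w
      + 2 * (c 0 * y + c 1 * x) * c 3 + c 3 ^ 2 * w), ?_⟩
    rw [hN, ha1, ha2]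
    linear_combination (c 0 ^ 2 + c 1 ^ 2) * ht
  have hNw : N = w := by
    obtain ⟨k, hk⟩ := hNdvd
    have hwz : (0:ℤ) < (w:ℤ) := by exact_mod_cast hw
    have hklt : k < 2 := by
      have hmul : (w:ℤ) * k < (w:ℤ) * 2 := by rw [← hk]; linarith [hNlt]
      exact lt_of_mul_lt_mul_left hmul hwz.le
    have hkpos : 0 < k := by
      by_contra hle
      push_neg at hle
      have : (w:ℤ) * k ≤ 0 := mul_nonpos_of_nonneg_of_nonpos hwz.le hle
      rw [← hk] at this
      linarith [hNpos]
    have hk1 : k = 1 := by omega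
    rw [hk, hk1, mul_one]
  -- assemble the Gaussian integers
  refine ⟨⟨-(c 2), -(c 3)⟩, ⟨c 0, c 1⟩, ?_, ?_, ?_⟩
  · intro h
    rw [Zsqrtd.ext_iff] at h
    obtain ⟨h0, h1⟩ := h
    simp only [Zsqrtd.re_zero, Zsqrtd.im_zero] at h0 h1
    have hwz : (2:ℤ) ≤ (w:ℤ) := by exact_mod_cast hw2
    have ha1' : a1 = c 2 * w := by rw [ha1, h0, h1]; ring
    have ha2' : a2 = c 3 * w := by rw [ha2, h0, h1]; ring
    have heq : (w:ℤ) = (c 2 ^ 2 + c 3 ^ 2) * w ^ 2 := by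
      have hNw' := hNw
      rw [hN, h0, h1, ha1', ha2'] at hNw'
      linear_combination -hNw'
    have hs0 : (0:ℤ) ≤ c 2 ^ 2 + c 3 ^ 2 := by positivity
    rcases hs0.eq_or_lt with he | hpos'
    · rw [← he, zero_mul] at heq
      linarith
    · have h1' : (1:ℤ) ≤ c 2 ^ 2 + c 3 ^ 2 := hpos'
      have hsq : (w:ℤ) ^ 2 ≤ (c 2 ^ 2 + c 3 ^ 2) * w ^ 2 := by
        have := mul_le_mul_of_nonneg_right h1' (sq_nonneg ((w:ℤ)))
        linarith
      have h2w : 2 * (w:ℤ) ≤ (w:ℤ) * (w:ℤ) :=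
        mul_le_mul_of_nonneg_right hwz (by linarith)
      nlinarith [heq, hsq, h2w]
  · have hre : ((⟨c 0, c 1⟩ : GaussianInt) * ⟨x, y⟩ - ⟨-(c 2), -(c 3)⟩ * (w : GaussianInt)).re
        = a1 := by
      simp [Zsqrtd.re_mul, Zsqrtd.im_mul, ha1]
      try ring
    have him : ((⟨c 0, c 1⟩ : GaussianInt) * ⟨x, y⟩ - ⟨-(c 2), -(c 3)⟩ * (w : GaussianInt)).im
        = a2 := by
      simp [Zsqrtd.re_mul, Zsqrtd.im_mul, ha2]
      try ring
    rw [Zsqrtd.norm_def, Zsqrtd.norm_def, hre, him, ← hNw, hN]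
    ring
  · have hre : ((⟨c 0, c 1⟩ : GaussianInt) * ⟨x, y⟩ - ⟨-(c 2), -(c 3)⟩ * (w : GaussianInt)).re
        = a1 := by
      simp [Zsqrtd.re_mul, Zsqrtd.im_mul, ha1]
      try ring
    have him : ((⟨c 0, c 1⟩ : GaussianInt) * ⟨x, y⟩ - ⟨-(c 2), -(c 3)⟩ * (w : GaussianInt)).im
        = a2 := by
      simp [Zsqrtd.re_mul, Zsqrtd.im_mul, ha2]
      try ring
    rw [hre, him, ← hNw, hN]
    ring
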